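/- Let Σ = {a, b, c}. Two words w, w' over Σ are strongly M-equivalent if and only if w ≡_M w' with respect to each of the three ordered alphabets {a < b < c}, {b < a < c}, and {a < c < b}. -/

import Mathlib

/-- The number of occurrences of `v` as a scattered subword (subsequence) of `w`. -/
def lcount (v w : List (Fin 3)) : ℕ := w.sublists.count v

/-- The letters of the ternary alphabet `Σ = {a, b, c}`. -/
def A : Fin 3 := 0
def B : Fin 3 := 1
def C : Fin 3 := 2

/-- `w` and `w'` are M-equivalent with respect to the ordered alphabet `{x < y < z}`:
they have the same Parikh matrix, equivalently the same scattered-subword counts for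
`x, y, z, xy, yz, xyz`. -/
def Mequiv (x y z : Fin 3) (w w' : List (Fin 3)) : Prop :=
  lcount [x] w = lcount [x] w' ∧ lcount [y] w = lcount [y] w' ∧
  lcount [z] w = lcount [z] w' ∧ lcount [x, y] w = lcount [x, y] w' ∧
  lcount [y, z] w = lcount [y, z] w' ∧ lcount [x, y, z] w = lcount [x, y, z] w'

/-- Strong M-equivalence: M-equivalence with respect to every ordering of `{a, b, c}`. -/
def StrongME (w w' : List (Fin 3)) : Prop :=
  ∀ x y z : Fin 3, [x, y, z].Perm [A, B, C] → Mequiv x y z w w'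

/-- `t`-fold repetition of the word `l`. -/
def lpow (l : List (Fin 3)) (n : ℕ) : List (Fin 3) := (List.replicate n l).flatten

lemma beq_eq : (List.instBEq : BEq (List (Fin 3))) = instBEqOfDecidableEq :=
  lawful_beq_subsingleton _ _

lemma lcount_eq (v w : List (Fin 3)) : lcount v w = w.sublists'.count v := by
  unfold lcount; exact (w.sublists_perm_sublists').count_eq v

lemma lcount_nil (w : List (Fin 3)) : lcount [] w = 1 := by
  rw [lcount_eq]
  induction w with
  | nil => rfl
  | cons a l ih =>
    rw [List.sublists'_cons, List.count_append, ih]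
    simp [List.count_eq_zero]

lemma lcount_cons (a b : Fin 3) (t w : List (Fin 3)) :
    lcount (b :: t) (a :: w) = lcount (b :: t) w + if b = a then lcount t w else 0 := by
  simp only [lcount_eq, List.sublists'_cons, List.count_append]
  congr 1
  by_cases h : b = a
  · subst h
    rw [if_pos rfl]
    exact List.count_map_of_injective w.sublists' (List.cons b) List.cons_injective t
  · rw [if_neg h, List.count_eq_zero]
    intro hm
    obtain ⟨s, _, hs⟩ := List.mem_map.mp hm
    exact h (List.cons.injEq .. ▸ hs).1.symm

lemma lcount_single_cons (a x : Fin 3) (w : List (Fin 3)) :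
    lcount [x] (a :: w) = lcount [x] w + if x = a then 1 else 0 := by
  rw [lcount_cons]; split <;> simp [lcount_nil]

lemma L1 (x y : Fin 3) (hxy : x ≠ y) (w : List (Fin 3)) :
    lcount [x] w * lcount [y] w = lcount [x, y] w + lcount [y, x] w := by
  induction w with
  | nil => simp [lcount]
  | cons d w ih =>
    rw [lcount_single_cons, lcount_single_cons, lcount_cons, lcount_cons]
    by_cases hx : x = d
    · subst hx
      rw [if_pos rfl, if_pos rfl, if_neg (fun h => hxy h.symm), if_neg (Ne.symm hxy)]
      nlinarith [ih]
    · rw [if_neg hx, if_neg hx]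
      by_cases hy : y = d
      · rw [if_pos hy, if_pos hy]
        nlinarith [ih]
      · rw [if_neg hy, if_neg hy]
        simpa using ih

lemma L2 (x y z : Fin 3) (hxy : x ≠ y) (hxz : x ≠ z) (hyz : y ≠ z) (w : List (Fin 3)) :
    lcount [x, y] w * lcount [z] w =
      lcount [x, y, z] w + lcount [x, z, y] w + lcount [z, x, y] w := by
  induction w with
  | nil => simp [lcount]
  | cons d w ih =>
    rw [lcount_single_cons, lcount_cons, lcount_cons, lcount_cons, lcount_cons]
    by_cases hx : x = d
    · subst hx
      rw [if_pos rfl, if_pos rfl, if_pos rfl, if_neg hxz.symm, if_neg (Ne.symm hxz)]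
      have h1 := L1 y z hyz w
      nlinarith [ih, h1]
    · rw [if_neg hx, if_neg hx, if_neg hx]
      by_cases hz : z = d
      · rw [if_pos hz, if_pos hz]
        nlinarith [ih]
      · rw [if_neg hz, if_neg hz]
        simpa using ih

theorem strongME_iff_three_orders (w w' : List (Fin 3)) :
    StrongME w w' ↔
      Mequiv A B C w w' ∧ Mequiv B A C w w' ∧ Mequiv A C B w w' := by
  constructor
  · intro h
    exact ⟨h A B C (by decide), h B A C (by decide), h A C B (by decide)⟩
  · rintro ⟨⟨eA, eB, eC, eAB, eBC, eABC⟩, ⟨_, _, _, eBA, eAC, eBAC⟩,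
      ⟨_, _, _, _, eCB, eACB⟩⟩
    have eCA : lcount [C, A] w = lcount [C, A] w' := by
      have t := L1 C A (by decide) w
      have t' := L1 C A (by decide) w'
      rw [eC, eA, eAC] at t
      have := t.symm.trans t'
      omega
    have eBCA : lcount [B, C, A] w = lcount [B, C, A] w' := by
      have t := L2 B C A (by decide) (by decide) (by decide) w
      have t' := L2 B C A (by decide) (by decide) (by decide) w'
      rw [eBC, eA, eBAC, eABC] at t
      have := t.symm.trans t'
      omega
    have eCAB : lcount [C, A, B] w = lcount [C, A, B] w' := by
      have t := L2 A B C (by decide) (by decide) (by decide) w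
      have t' := L2 A B C (by decide) (by decide) (by decide) w'
      rw [eAB, eC, eABC, eACB] at t
      have := t.symm.trans t'
      omega
    have eCBA : lcount [C, B, A] w = lcount [C, B, A] w' := by
      have t := L2 C B A (by decide) (by decide) (by decide) w
      have t' := L2 C B A (by decide) (by decide) (by decide) w'
      rw [eCB, eA, eCAB, eACB] at t
      have := t.symm.trans t'
      omega
    intro x y z hp
    fin_cases x <;> fin_cases y <;> fin_cases z <;>
      try exact absurd hp (by decide)
    · exact ⟨eA, eB, eC, eAB, eBC, eABC⟩
    · exact ⟨eA, eC, eB, eAC, eCB, eACB⟩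
    · exact ⟨eB, eA, eC, eBA, eAC, eBAC⟩
    · exact ⟨eB, eC, eA, eBC, eCA, eBCA⟩
    · exact ⟨eC, eA, eB, eCA, eAB, eCAB⟩
    · exact ⟨eC, eB, eA, eCB, eBA, eCBA⟩
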